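/- arXiv:2208.01450 — 3 statements merged into one kernel-verified Lean document; each statement's English description precedes it below -/
import Mathlib

section
/- Let f be a data map and s = (Γ, Δ) a sequent with (Γ, Δ) ≠ (∅, ∅). Then I_s(ℱ'(f)) = {t ∈ [0,1] : t(s,f) ≤ t < u_s}, where u_s = min{t(s',f) : s' ⪯ s, s' ≠ s}. In particular, whenever I_s(ℱ'(f)) is nonempty it is a half-open interval [t(s,f), u_s) with left endpoint t(s,f) (the birth time) and right endpoint u_s (the death time). -/
open MeasureTheory Set

/-- `q_f(s)`: the measure of the intersection `⋂_{a ∈ Γ} f(a)` (empty intersection = `X`). -/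
noncomputable def qOf {A B X : Type*} [MeasurableSpace X] (μ : Measure X)
    (f : A ⊕ B → Set X) (Γ : Finset A) : ℝ :=
  (μ (⋂ a ∈ Γ, f (Sum.inl a))).toReal

/-- `p_f(s)`: the measure of `⋂_{a ∈ Γ} f(a) ∩ ⋃_{x ∈ Δ} f(x)` (empty union = `∅`). -/
noncomputable def pOf {A B X : Type*} [MeasurableSpace X] (μ : Measure X)
    (f : A ⊕ B → Set X) (s : Finset A × Finset B) : ℝ :=
  (μ ((⋂ a ∈ s.1, f (Sum.inl a)) ∩ ⋃ x ∈ s.2, f (Sum.inr x))).toReal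

/-- Membership of the sequent `s` in the poset `𝒮'_t(f)` of Filtration I:
`s ∈ 𝒮'_t(f)` iff `p_f(s) ≥ (1 − t) · q_f(s)`. -/
def memFiltI {A B X : Type*} [MeasurableSpace X] (μ : Measure X)
    (f : A ⊕ B → Set X) (t : ℝ) (s : Finset A × Finset B) : Prop :=
  pOf μ f s ≥ (1 - t) * qOf μ f s.1

/-- The birth time `t(s,f) = inf {t ∈ [0,1] : s ∈ 𝒮'_t(f)}`. -/
noncomputable def birthTime {A B X : Type*} [MeasurableSpace X] (μ : Measure X)
    (f : A ⊕ B → Set X) (s : Finset A × Finset B) : ℝ :=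
  sInf {t : ℝ | t ∈ Icc (0:ℝ) 1 ∧ memFiltI μ f t s}

/-- `p` is a minimal element of the subset `Q` of a poset. -/
def IsMinimalIn {P : Type*} [PartialOrder P] (Q : Set P) (p : P) : Prop :=
  p ∈ Q ∧ ∀ q ∈ Q, q ≤ p → q = p

lemma memFiltI_mono {A B X : Type*} [MeasurableSpace X] (μ : Measure X)
    (f : A ⊕ B → Set X) {t t' : ℝ} (h : t ≤ t') (s : Finset A × Finset B)
    (hm : memFiltI μ f t s) : memFiltI μ f t' s := by
  unfold memFiltI at *
  have hq : (0:ℝ) ≤ qOf μ f s.1 := ENNReal.toReal_nonneg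
  nlinarith

lemma memFiltI_iff_birth_le {A B X : Type*} [MeasurableSpace X] (μ : Measure X)
    (f : A ⊕ B → Set X) (s : Finset A × Finset B) {t : ℝ} (ht : t ∈ Icc (0:ℝ) 1) :
    memFiltI μ f t s ↔ birthTime μ f s ≤ t := by
  set S := {t : ℝ | t ∈ Icc (0:ℝ) 1 ∧ memFiltI μ f t s} with hS
  have hne : S.Nonempty := ⟨1, ⟨zero_le_one, le_refl 1⟩, by
    show pOf μ f s ≥ (1 - 1) * qOf μ f s.1
    simp [ENNReal.toReal_nonneg, pOf]⟩
  have hbdd : BddBelow S := ⟨0, fun x hx => hx.1.1⟩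
  have hclosed : IsClosed S := by
    have : S = Icc (0:ℝ) 1 ∩ {t : ℝ | (1 - t) * qOf μ f s.1 ≤ pOf μ f s} := rfl
    rw [this]
    exact isClosed_Icc.inter (isClosed_le (by continuity) continuous_const)
  constructor
  · intro h
    exact csInf_le hbdd ⟨ht, h⟩
  · intro h
    have hmem : sInf S ∈ S := hclosed.csInf_mem hne hbdd
    exact memFiltI_mono μ f h s hmem.2

/-- For a sequent `s ≠ (∅, ∅)`, the bar `I_s(ℱ'(f)) = {t ∈ [0,1] : p ∈ Min(𝒮'_t(f))}`
equals `{t ∈ [0,1] : t(s,f) ≤ t < u_s}` where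
`u_s = min {t(s',f) : s' ⪯ s, s' ≠ s}`; in particular, whenever nonempty, it is the
half-open interval `[t(s,f), u_s)` intersected with `[0,1]`. -/
theorem bar_filtI_eq_Ico {A B X : Type*} [Fintype A] [Fintype B] [MeasurableSpace X]
    (μ : Measure X) [IsProbabilityMeasure μ] (f : A ⊕ B → Set X)
    (hf : ∀ v, MeasurableSet (f v)) (s : Finset A × Finset B) (hs : s ≠ (∅, ∅)) :
    {t : ℝ | t ∈ Icc (0:ℝ) 1 ∧
        IsMinimalIn {s' : Finset A × Finset B | memFiltI μ f t s'} s} =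
      Icc (0:ℝ) 1 ∩
        Ico (birthTime μ f s)
          (sInf (birthTime μ f '' {s' : Finset A × Finset B | s' ≤ s ∧ s' ≠ s})) := by
  have hsetne : ({s' : Finset A × Finset B | s' ≤ s ∧ s' ≠ s}).Nonempty := by
    refine ⟨(∅, ∅), ⟨⟨Finset.empty_subset _, Finset.empty_subset _⟩, Ne.symm hs⟩⟩
  have hne : (birthTime μ f '' {s' : Finset A × Finset B | s' ≤ s ∧ s' ≠ s}).Nonempty :=
    hsetne.image _
  have hfin : (birthTime μ f '' {s' : Finset A × Finset B | s' ≤ s ∧ s' ≠ s}).Finite :=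
    Set.Finite.image _ (Set.toFinite _)
  ext t
  simp only [Set.mem_setOf_eq, Set.mem_inter_iff, Set.mem_Ico, IsMinimalIn]
  constructor
  · rintro ⟨ht, hmem, hmin⟩
    refine ⟨ht, (memFiltI_iff_birth_le μ f s ht).1 hmem, ?_⟩
    obtain ⟨s', hs', heq⟩ := hne.csInf_mem hfin
    rw [← heq]
    by_contra hle
    push_neg at hle
    have : memFiltI μ f t s' := (memFiltI_iff_birth_le μ f s' ht).2 hle
    exact hs'.2 (hmin s' this hs'.1)
  · rintro ⟨ht, hb, hlt⟩
    refine ⟨ht, (memFiltI_iff_birth_le μ f s ht).2 hb, ?_⟩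
    intro s' hs' hle
    by_contra hne'
    have hmemimg : birthTime μ f s' ∈
        birthTime μ f '' {s' : Finset A × Finset B | s' ≤ s ∧ s' ≠ s} :=
      ⟨s', ⟨hle, hne'⟩, rfl⟩
    have h1 := csInf_le hfin.bddBelow hmemimg
    have h2 : birthTime μ f s' ≤ t := (memFiltI_iff_birth_le μ f s' ht).1 hs'
    linarith
end

section
/- Let 0 < ε ≤ 1 and 0 < δ ≤ 1, let f and f' be two ε-granular data maps, and let s = (Γ, Δ) be a sequent satisfying the δ-condition under both f and f'. Then |t(s,f) − t(s,f')| ≤ (2/(δ·ε)) · data-dist(f, f'). -/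
open MeasureTheory Set

/-- The distance between two data maps:
`data-dist(f,f') = Σ_{v ∈ V_A ∪ V_S} m(f(v) Δ f'(v))`. -/
noncomputable def dataDist {A B X : Type*} [Fintype A] [Fintype B] [MeasurableSpace X]
    (μ : Measure X) (f f' : A ⊕ B → Set X) : ℝ :=
  ∑ v : A ⊕ B, (μ (symmDiff (f v) (f' v))).toReal

/-- A data map `f` is `ε`-granular if `m(f(v)) > ε` for every variable `v`. -/
def Granular {A B X : Type*} [MeasurableSpace X] (μ : Measure X)
    (f : A ⊕ B → Set X) (ε : ℝ) : Prop :=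
  ∀ v : A ⊕ B, ε < (μ (f v)).toReal

/-- The sequent `s = (Γ, Δ)` satisfies the `δ`-condition under `f`:
`m(⋂_{b ∈ Γ} f(b)) > δ · m(f(a))` for every `a ∈ Γ`. -/
def DeltaCond {A B X : Type*} [MeasurableSpace X] (μ : Measure X)
    (f : A ⊕ B → Set X) (δ : ℝ) (s : Finset A × Finset B) : Prop :=
  ∀ a ∈ s.1, δ * (μ (f (Sum.inl a))).toReal < qOf μ f s.1

open scoped symmDiff

lemma birthTime_eq {A B X : Type*} [MeasurableSpace X] (μ : Measure X)
    (f : A ⊕ B → Set X) (s : Finset A × Finset B)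
    (hq : 0 < qOf μ f s.1) (hpq : pOf μ f s ≤ qOf μ f s.1) :
    birthTime μ f s = 1 - pOf μ f s / qOf μ f s.1 := by
  have hp0 : 0 ≤ pOf μ f s := ENNReal.toReal_nonneg
  have hd1 : pOf μ f s / qOf μ f s.1 ≤ 1 := (div_le_one hq).mpr hpq
  have hd0 : 0 ≤ pOf μ f s / qOf μ f s.1 := div_nonneg hp0 hq.le
  have hset : {t : ℝ | t ∈ Icc (0:ℝ) 1 ∧ memFiltI μ f t s}
      = Icc (1 - pOf μ f s / qOf μ f s.1) 1 := by
    ext t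
    simp only [mem_setOf_eq, mem_Icc, memFiltI, ge_iff_le]
    constructor
    · rintro ⟨⟨_, ht1⟩, hm⟩
      refine ⟨?_, ht1⟩
      have : 1 - t ≤ pOf μ f s / qOf μ f s.1 := (le_div_iff₀ hq).mpr hm
      linarith
    · rintro ⟨hl, ht1⟩
      refine ⟨⟨by linarith, ht1⟩, ?_⟩
      have : 1 - t ≤ pOf μ f s / qOf μ f s.1 := by linarith
      calc (1 - t) * qOf μ f s.1 ≤ (pOf μ f s / qOf μ f s.1) * qOf μ f s.1 :=
            mul_le_mul_of_nonneg_right this hq.le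
        _ = pOf μ f s := div_mul_cancel₀ _ hq.ne'
  rw [birthTime, hset, csInf_Icc (by linarith)]

open scoped symmDiff

lemma sd_q_subset {A B X : Type*} (f f' : A ⊕ B → Set X) (G : Finset A) :
    ((⋂ a ∈ G, f (Sum.inl a)) ∆ (⋂ a ∈ G, f' (Sum.inl a)))
      ⊆ ⋃ v, (f v) ∆ (f' v) := by
  intro x hx
  simp only [Set.symmDiff_def, Set.mem_union, Set.mem_diff, Set.mem_iInter,
    Set.mem_iUnion, not_forall] at hx ⊢
  rcases hx with ⟨h1, a, ha, h2⟩ | ⟨h1, a, ha, h2⟩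
  · exact ⟨Sum.inl a, Or.inl ⟨h1 a ha, h2⟩⟩
  · exact ⟨Sum.inl a, Or.inr ⟨h1 a ha, h2⟩⟩

lemma sd_p_subset {A B X : Type*} (f f' : A ⊕ B → Set X) (G : Finset A) (D : Finset B) :
    (((⋂ a ∈ G, f (Sum.inl a)) ∩ ⋃ b ∈ D, f (Sum.inr b)) ∆
      ((⋂ a ∈ G, f' (Sum.inl a)) ∩ ⋃ b ∈ D, f' (Sum.inr b)))
      ⊆ ⋃ v, (f v) ∆ (f' v) := by
  intro x hx
  simp only [Set.symmDiff_def, Set.mem_union, Set.mem_diff, Set.mem_inter_iff,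
    Set.mem_iInter, Set.mem_iUnion, not_and, not_forall, not_exists] at hx ⊢
  rcases hx with ⟨⟨h1, b, hb, h2⟩, h3⟩ | ⟨⟨h1, b, hb, h2⟩, h3⟩
  · by_cases h4 : ∀ a ∈ G, x ∈ f' (Sum.inl a)
    · have := h3 h4 b hb
      exact ⟨Sum.inr b, Or.inl ⟨h2, this⟩⟩
    · push_neg at h4
      obtain ⟨a, ha, hna⟩ := h4
      exact ⟨Sum.inl a, Or.inl ⟨h1 a ha, hna⟩⟩
  · by_cases h4 : ∀ a ∈ G, x ∈ f (Sum.inl a)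
    · have := h3 h4 b hb
      exact ⟨Sum.inr b, Or.inr ⟨h2, this⟩⟩
    · push_neg at h4
      obtain ⟨a, ha, hna⟩ := h4
      exact ⟨Sum.inl a, Or.inr ⟨h1 a ha, hna⟩⟩

/-- Stability lemma with explicit constant: for `ε`-granular data maps `f, f'` and a sequent
`s` satisfying the `δ`-condition under both, the birth times differ by at most
`(2/(δ·ε)) · data-dist(f,f')`. -/
theorem abs_birthTime_sub_birthTime_le {A B X : Type*} [Fintype A] [Fintype B]
    [MeasurableSpace X] (μ : Measure X) [IsProbabilityMeasure μ]
    (ε δ : ℝ) (hε0 : 0 < ε) (hε1 : ε ≤ 1) (hδ0 : 0 < δ) (hδ1 : δ ≤ 1)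
    (f f' : A ⊕ B → Set X)
    (hf : ∀ v, MeasurableSet (f v)) (hf' : ∀ v, MeasurableSet (f' v))
    (hgran : Granular μ f ε) (hgran' : Granular μ f' ε)
    (s : Finset A × Finset B) (hδf : DeltaCond μ f δ s) (hδf' : DeltaCond μ f' δ s) :
    |birthTime μ f s - birthTime μ f' s| ≤ (2 / (δ * ε)) * dataDist μ f f' := by
  set q := qOf μ f s.1 with hqdef
  set q' := qOf μ f' s.1 with hq'def
  set p := pOf μ f s with hpdef
  set p' := pOf μ f' s with hp'def
  set D := dataDist μ f f' with hDdef
  have hδε : 0 < δ * ε := mul_pos hδ0 hε0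
  -- lower bounds on q, q'
  have key : ∀ (g : A ⊕ B → Set X), Granular μ g ε → DeltaCond μ g δ s →
      δ * ε ≤ qOf μ g s.1 := by
    intro g hg hd
    rcases s.1.eq_empty_or_nonempty with he | ⟨a, ha⟩
    · have : qOf μ g s.1 = 1 := by
        simp [qOf, he]
      rw [this]
      calc δ * ε ≤ 1 * 1 := mul_le_mul hδ1 hε1 hε0.le one_pos.le
        _ = 1 := by ring
    · have h1 := hd a ha
      have h2 := hg (Sum.inl a)
      nlinarith
  have hq : δ * ε ≤ q := key f hgran hδf
  have hq' : δ * ε ≤ q' := key f' hgran' hδf'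
  have hq0 : 0 < q := lt_of_lt_of_le hδε hq
  have hq'0 : 0 < q' := lt_of_lt_of_le hδε hq'
  -- p ≤ q
  have hpq : p ≤ q := by
    apply ENNReal.toReal_mono (measure_ne_top _ _)
    exact measure_mono inter_subset_left
  have hpq' : p' ≤ q' := by
    apply ENNReal.toReal_mono (measure_ne_top _ _)
    exact measure_mono inter_subset_left
  have hp0 : 0 ≤ p := ENNReal.toReal_nonneg
  have hp'0 : 0 ≤ p' := ENNReal.toReal_nonneg
  -- the union of symmetric differences bounds things
  have hUnion : (μ (⋃ v, (f v) ∆ (f' v))).toReal ≤ D := by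
    have h1 : μ (⋃ v, (f v) ∆ (f' v)) ≤ ∑ v, μ ((f v) ∆ (f' v)) :=
      measure_iUnion_fintype_le _ _
    have h2 : (∑ v, μ ((f v) ∆ (f' v))) ≠ ⊤ :=
      ENNReal.sum_ne_top.mpr fun v _ => measure_ne_top _ _
    calc (μ (⋃ v, (f v) ∆ (f' v))).toReal ≤ (∑ v, μ ((f v) ∆ (f' v))).toReal :=
          ENNReal.toReal_mono h2 h1
      _ = D := by rw [hDdef, dataDist, ENNReal.toReal_sum (fun v _ => measure_ne_top _ _)]
  have hmq : ∀ a ∈ s.1, True := fun _ _ => trivial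
  -- measurability
  have hmG : MeasurableSet (⋂ a ∈ s.1, f (Sum.inl a)) :=
    MeasurableSet.biInter s.1.countable_toSet (fun a _ => hf _)
  have hmG' : MeasurableSet (⋂ a ∈ s.1, f' (Sum.inl a)) :=
    MeasurableSet.biInter s.1.countable_toSet (fun a _ => hf' _)
  have hmP : MeasurableSet ((⋂ a ∈ s.1, f (Sum.inl a)) ∩ ⋃ x ∈ s.2, f (Sum.inr x)) :=
    hmG.inter (MeasurableSet.biUnion s.2.countable_toSet (fun b _ => hf _))
  have hmP' : MeasurableSet ((⋂ a ∈ s.1, f' (Sum.inl a)) ∩ ⋃ x ∈ s.2, f' (Sum.inr x)) :=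
    hmG'.inter (MeasurableSet.biUnion s.2.countable_toSet (fun b _ => hf' _))
  -- |q - q'| ≤ D
  have hqd : |q - q'| ≤ D := by
    calc |q - q'|
        ≤ (μ ((⋂ a ∈ s.1, f (Sum.inl a)) ∆ (⋂ a ∈ s.1, f' (Sum.inl a)))).toReal :=
          abs_measureReal_sub_le_measureReal_symmDiff hmG.nullMeasurableSet
            hmG'.nullMeasurableSet
      _ ≤ (μ (⋃ v, (f v) ∆ (f' v))).toReal :=
          ENNReal.toReal_mono (measure_ne_top _ _) (measure_mono (sd_q_subset f f' s.1))
      _ ≤ D := hUnion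
  have hpd : |p - p'| ≤ D := by
    calc |p - p'|
        ≤ (μ (((⋂ a ∈ s.1, f (Sum.inl a)) ∩ ⋃ x ∈ s.2, f (Sum.inr x)) ∆
            ((⋂ a ∈ s.1, f' (Sum.inl a)) ∩ ⋃ x ∈ s.2, f' (Sum.inr x)))).toReal :=
          abs_measureReal_sub_le_measureReal_symmDiff hmP.nullMeasurableSet
            hmP'.nullMeasurableSet
      _ ≤ (μ (⋃ v, (f v) ∆ (f' v))).toReal :=
          ENNReal.toReal_mono (measure_ne_top _ _) (measure_mono (sd_p_subset f f' s.1 s.2))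
      _ ≤ D := hUnion
  have hD0 : 0 ≤ D := (abs_nonneg _).trans hqd
  -- rewrite birth times
  rw [birthTime_eq μ f s hq0 hpq, birthTime_eq μ f' s hq'0 hpq']
  have hrw : (1 - p / q) - (1 - p' / q') = p' / q' - p / q := by ring
  rw [hrw]
  set S := |p - p'| + |q - q'| with hSdef
  have hS0 : 0 ≤ S := add_nonneg (abs_nonneg _) (abs_nonneg _)
  have hdd : |p' / q' - p / q| ≤ S / (δ * ε) := by
    rw [div_sub_div _ _ hq'0.ne' hq0.ne', abs_div, abs_of_pos (mul_pos hq'0 hq0)]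
    have hnum : |p' * q - q' * p| ≤ q * S := by
      rw [abs_le]
      constructor
      · nlinarith [le_abs_self (p - p'), neg_abs_le (p - p'), le_abs_self (q - q'),
          neg_abs_le (q - q'), abs_nonneg (p - p'), abs_nonneg (q - q')]
      · nlinarith [le_abs_self (p - p'), neg_abs_le (p - p'), le_abs_self (q - q'),
          neg_abs_le (q - q'), abs_nonneg (p - p'), abs_nonneg (q - q')]
    calc |p' * q - q' * p| / (q' * q) ≤ (q * S) / (q' * q) := by
          gcongr
      _ = S / q' := by
          rw [mul_comm q' q, mul_div_mul_left _ _ hq0.ne']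
      _ ≤ S / (δ * ε) := by gcongr
  calc |p' / q' - p / q| ≤ S / (δ * ε) := hdd
    _ ≤ (D + D) / (δ * ε) := by
        gcongr
        exact add_le_add hpd hqd
    _ = 2 / (δ * ε) * D := by ring
end

section
/- Let 0 < ε ≤ 1 and 0 < δ ≤ 1 and let V_A, V_S be finite sets. There exists a constant C > 0, depending only on card(V_A), card(V_S), ε and δ, such that for every measure space (X, m) with m(X) = 1 and every pair of ε-granular data maps f, f' for which the set 𝒮_δ of sequents satisfying the δ-condition is the same under f and f', one has Σ_{s∈𝒮_δ} λ(I_s(ℱ_δ(f)) Δ I_s(ℱ_δ(f'))) ≤ C · data-dist(f, f'), where λ denotes Lebesgue measure on [0,1]. -/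
open MeasureTheory Set

/-- The bar `I_s(ℱ_δ(f))` of the sequent `s` in the sub-filtration `ℱ_δ(f)` of Filtration I:
its `t`-th poset is `𝒮'_t(f) ∩ 𝒮_δ(f)` with the order induced from `𝒮`. -/
def barDelta {A B X : Type*} [MeasurableSpace X] (μ : Measure X)
    (f : A ⊕ B → Set X) (δ : ℝ) (s : Finset A × Finset B) : Set ℝ :=
  {t : ℝ | t ∈ Icc (0:ℝ) 1 ∧
    IsMinimalIn {s' : Finset A × Finset B | memFiltI μ f t s' ∧ DeltaCond μ f δ s'} s}

set_option linter.unusedSectionVars false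

section AuxStability

variable {A B X : Type*} [Fintype A] [Fintype B] [MeasurableSpace X]

lemma abs_toReal_measure_sub_le (μ : Measure X) [IsFiniteMeasure μ] (S S' : Set X) :
    |(μ S).toReal - (μ S').toReal| ≤ (μ (symmDiff S S')).toReal := by
  have key : ∀ T T' : Set X, (μ T).toReal ≤ (μ T').toReal + (μ (symmDiff T T')).toReal := by
    intro T T'
    have h1 : μ T ≤ μ T' + μ (symmDiff T T') := by
      refine le_trans (measure_mono ?_) (measure_union_le _ _)
      intro x hx
      by_cases h : x ∈ T'
      · exact Or.inl h
      · exact Or.inr (by rw [Set.mem_symmDiff]; exact Or.inl ⟨hx, h⟩)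
    have h2 := ENNReal.toReal_mono
      (by exact ENNReal.add_ne_top.mpr ⟨measure_ne_top μ _, measure_ne_top μ _⟩) h1
    rwa [ENNReal.toReal_add (measure_ne_top μ _) (measure_ne_top μ _)] at h2
  have h2 := key S S'
  have h3 := key S' S
  rw [symmDiff_comm] at h3
  rw [abs_sub_le_iff]
  constructor <;> linarith

lemma toReal_measure_le_dataDist (μ : Measure X) [IsFiniteMeasure μ]
    (f f' : A ⊕ B → Set X) (S S' : Set X)
    (h : symmDiff S S' ⊆ ⋃ v : A ⊕ B, symmDiff (f v) (f' v)) :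
    |(μ S).toReal - (μ S').toReal| ≤ dataDist μ f f' := by
  refine (abs_toReal_measure_sub_le μ S S').trans ?_
  have h1 : μ (symmDiff S S') ≤ ∑ v : A ⊕ B, μ (symmDiff (f v) (f' v)) :=
    (measure_mono h).trans (measure_iUnion_fintype_le _ _)
  have h2 := ENNReal.toReal_mono
    (ENNReal.sum_lt_top.mpr fun v _ => measure_lt_top μ _).ne h1
  rwa [ENNReal.toReal_sum (fun v _ => measure_ne_top μ _)] at h2

lemma symmDiff_iInter_subset (f f' : A ⊕ B → Set X) (Γ : Finset A) :
    symmDiff (⋂ a ∈ Γ, f (Sum.inl a)) (⋂ a ∈ Γ, f' (Sum.inl a)) ⊆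
      ⋃ v : A ⊕ B, symmDiff (f v) (f' v) := by
  intro x hx
  rw [Set.mem_symmDiff] at hx
  by_cases h : ∀ a ∈ Γ, (x ∈ f (Sum.inl a) ↔ x ∈ f' (Sum.inl a))
  · exfalso
    have hI : (x ∈ ⋂ a ∈ Γ, f (Sum.inl a)) ↔ (x ∈ ⋂ a ∈ Γ, f' (Sum.inl a)) := by
      simp only [Set.mem_iInter]
      exact ⟨fun hx a ha => (h a ha).mp (hx a ha), fun hx a ha => (h a ha).mpr (hx a ha)⟩
    tauto
  · push_neg at h
    obtain ⟨a, ha, hne⟩ := h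
    refine Set.mem_iUnion.mpr ⟨Sum.inl a, ?_⟩
    rw [Set.mem_symmDiff]
    tauto

lemma symmDiff_pSet_subset (f f' : A ⊕ B → Set X) (s : Finset A × Finset B) :
    symmDiff ((⋂ a ∈ s.1, f (Sum.inl a)) ∩ ⋃ b ∈ s.2, f (Sum.inr b))
             ((⋂ a ∈ s.1, f' (Sum.inl a)) ∩ ⋃ b ∈ s.2, f' (Sum.inr b)) ⊆
      ⋃ v : A ⊕ B, symmDiff (f v) (f' v) := by
  intro x hx
  rw [Set.mem_symmDiff] at hx
  by_cases h1 : ∀ a ∈ s.1, (x ∈ f (Sum.inl a) ↔ x ∈ f' (Sum.inl a))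
  · by_cases h2 : ∀ b ∈ s.2, (x ∈ f (Sum.inr b) ↔ x ∈ f' (Sum.inr b))
    · exfalso
      have hI : (x ∈ ⋂ a ∈ s.1, f (Sum.inl a)) ↔ (x ∈ ⋂ a ∈ s.1, f' (Sum.inl a)) := by
        simp only [Set.mem_iInter]
        exact ⟨fun hx a ha => (h1 a ha).mp (hx a ha), fun hx a ha => (h1 a ha).mpr (hx a ha)⟩
      have hU : (x ∈ ⋃ b ∈ s.2, f (Sum.inr b)) ↔ (x ∈ ⋃ b ∈ s.2, f' (Sum.inr b)) := by
        simp only [Set.mem_iUnion]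
        constructor
        · rintro ⟨b, hb, hxb⟩; exact ⟨b, hb, (h2 b hb).mp hxb⟩
        · rintro ⟨b, hb, hxb⟩; exact ⟨b, hb, (h2 b hb).mpr hxb⟩
      simp only [Set.mem_inter_iff] at hx
      tauto
    · push_neg at h2
      obtain ⟨b, hb, hne⟩ := h2
      refine Set.mem_iUnion.mpr ⟨Sum.inr b, ?_⟩
      rw [Set.mem_symmDiff]
      tauto
  · push_neg at h1
    obtain ⟨a, ha, hne⟩ := h1
    refine Set.mem_iUnion.mpr ⟨Sum.inl a, ?_⟩
    rw [Set.mem_symmDiff]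
    tauto

/-- The set of times where the two filtrations disagree about `s` (restricted to `𝒮_δ`). -/
def xorSet (μ : Measure X) (f f' : A ⊕ B → Set X) (δ : ℝ) (s : Finset A × Finset B) :
    Set ℝ :=
  {t : ℝ | t ∈ Icc (0:ℝ) 1 ∧ DeltaCond μ f δ s ∧
    ¬(memFiltI μ f t s ↔ memFiltI μ f' t s)}

lemma xorSet_swap_subset (μ : Measure X) (f f' : A ⊕ B → Set X) (δ : ℝ)
    (hiff : ∀ s, DeltaCond μ f δ s ↔ DeltaCond μ f' δ s) (s : Finset A × Finset B) :
    xorSet μ f' f δ s ⊆ xorSet μ f f' δ s := by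
  rintro t ⟨h1, h2, h3⟩
  exact ⟨h1, (hiff s).mpr h2, fun h => h3 h.symm⟩

lemma bar_sdiff_subset (μ : Measure X) (f f' : A ⊕ B → Set X) (δ : ℝ)
    (hiff : ∀ s, DeltaCond μ f δ s ↔ DeltaCond μ f' δ s) (s : Finset A × Finset B) :
    barDelta μ f δ s \ barDelta μ f' δ s ⊆
      ⋃ s'' : Finset A × Finset B, xorSet μ f f' δ s'' := by
  rintro t ⟨h1, h2⟩
  by_contra hcon
  simp only [Set.mem_iUnion, not_exists] at hcon
  have hx : ∀ s'', DeltaCond μ f δ s'' → (memFiltI μ f t s'' ↔ memFiltI μ f' t s'') := by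
    intro s'' hd
    by_contra hne
    exact hcon s'' ⟨h1.1, hd, hne⟩
  obtain ⟨htI, ⟨hm, hd⟩, hminval⟩ := h1
  apply h2
  refine ⟨htI, ⟨(hx s hd).mp hm, (hiff s).mp hd⟩, ?_⟩
  intro q hq hle
  exact hminval q ⟨(hx q ((hiff q).mpr hq.2)).mpr hq.1, (hiff q).mpr hq.2⟩ hle

lemma xor_vol_le (μ : Measure X) [IsProbabilityMeasure μ] (f f' : A ⊕ B → Set X)
    (ε δ : ℝ) (hε0 : 0 < ε) (hε1 : ε ≤ 1) (hδ0 : 0 < δ) (hδ1 : δ ≤ 1)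
    (hgf : Granular μ f ε) (hgf' : Granular μ f' ε)
    (hiff : ∀ s, DeltaCond μ f δ s ↔ DeltaCond μ f' δ s)
    (s : Finset A × Finset B) :
    (volume (xorSet μ f f' δ s)).toReal ≤ 2 / (δ * ε) * dataDist μ f f' := by
  have hδε : 0 < δ * ε := mul_pos hδ0 hε0
  have hK0 : 0 ≤ dataDist μ f f' :=
    Finset.sum_nonneg fun v _ => ENNReal.toReal_nonneg
  by_cases hd : DeltaCond μ f δ s
  · -- notation
    set K := dataDist μ f f' with hKdef
    set q := qOf μ f s.1 with hqdef
    set q' := qOf μ f' s.1 with hq'def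
    set p := pOf μ f s with hpdef
    set p' := pOf μ f' s with hp'def
    have hd' : DeltaCond μ f' δ s := (hiff s).mp hd
    have hq : δ * ε ≤ q := by
      rcases s.1.eq_empty_or_nonempty with hΓ | ⟨a, ha⟩
      · have : q = 1 := by
          simp [hqdef, qOf, hΓ]
        rw [this]; nlinarith
      · have h1 := hd a ha
        have h2 := hgf (Sum.inl a)
        nlinarith
    have hq' : δ * ε ≤ q' := by
      rcases s.1.eq_empty_or_nonempty with hΓ | ⟨a, ha⟩
      · have : q' = 1 := by
          simp [hq'def, qOf, hΓ]
        rw [this]; nlinarith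
      · have h1 := hd' a ha
        have h2 := hgf' (Sum.inl a)
        nlinarith
    have hq0 : 0 < q := lt_of_lt_of_le hδε hq
    have hq'0 : 0 < q' := lt_of_lt_of_le hδε hq'
    have hp0 : 0 ≤ p := ENNReal.toReal_nonneg
    have hp'0 : 0 ≤ p' := ENNReal.toReal_nonneg
    have hpq : p ≤ q := by
      exact ENNReal.toReal_mono (measure_ne_top μ _)
        (measure_mono Set.inter_subset_left)
    -- thresholds
    set τ := 1 - p / q with hτdef
    set τ' := 1 - p' / q' with hτ'def
    have hthr : ∀ t : ℝ, memFiltI μ f t s ↔ τ ≤ t := by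
      intro t
      unfold memFiltI
      rw [ge_iff_le, ← le_div_iff₀ hq0]
      constructor <;> intro h <;> simp only [hτdef] at * <;> linarith
    have hthr' : ∀ t : ℝ, memFiltI μ f' t s ↔ τ' ≤ t := by
      intro t
      unfold memFiltI
      rw [ge_iff_le, ← le_div_iff₀ hq'0]
      constructor <;> intro h <;> simp only [hτ'def] at * <;> linarith
    have hsub : xorSet μ f f' δ s ⊆ Ico (min τ τ') (max τ τ') := by
      rintro t ⟨_, _, hne⟩
      rw [hthr t, hthr' t] at hne
      constructor
      · by_cases hτt : τ ≤ t
        · exact le_trans (min_le_left _ _) hτt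
        · have : τ' ≤ t := by tauto
          exact le_trans (min_le_right _ _) this
      · by_cases hτt : τ ≤ t
        · have h2 : ¬ τ' ≤ t := by tauto
          exact lt_of_lt_of_le (not_le.mp h2) (le_max_right _ _)
        · exact lt_of_lt_of_le (not_le.mp hτt) (le_max_left _ _)
    have hvol : (volume (xorSet μ f f' δ s)).toReal ≤ |τ - τ'| := by
      have h1 : volume (xorSet μ f f' δ s) ≤ ENNReal.ofReal (max τ τ' - min τ τ') := by
        refine le_trans (measure_mono hsub) ?_
        rw [Real.volume_Ico]
      have h2 := ENNReal.toReal_mono ENNReal.ofReal_ne_top h1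
      rw [ENNReal.toReal_ofReal (by
        have := min_le_max (a := τ) (b := τ'); linarith)] at h2
      calc (volume (xorSet μ f f' δ s)).toReal ≤ max τ τ' - min τ τ' := h2
        _ = |τ' - τ| := max_sub_min_eq_abs τ τ'
        _ = |τ - τ'| := abs_sub_comm _ _
    refine hvol.trans ?_
    -- the dataDist bounds
    have hpd : |p - p'| ≤ K := by
      exact toReal_measure_le_dataDist μ f f' _ _ (symmDiff_pSet_subset f f' s)
    have hqd : |q - q'| ≤ K := by
      exact toReal_measure_le_dataDist μ f f' _ _ (symmDiff_iInter_subset f f' s.1)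
    -- the algebra
    have e1 : τ - τ' = (p' * q - p * q') / (q * q') := by
      simp only [hτdef, hτ'def]
      field_simp
      ring
    have e2 : |p' * q - p * q'| ≤ q * |p - p'| + q * |q - q'| := by
      have hr : p' * q - p * q' = q * (p' - p) + p * (q - q') := by ring
      calc |p' * q - p * q'| = |q * (p' - p) + p * (q - q')| := by rw [hr]
        _ ≤ |q * (p' - p)| + |p * (q - q')| := abs_add_le _ _
        _ = q * |p' - p| + p * |q - q'| := by
            rw [abs_mul, abs_mul, abs_of_nonneg hq0.le, abs_of_nonneg hp0]
        _ ≤ q * |p - p'| + q * |q - q'| := by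
            rw [abs_sub_comm p' p]
            have := abs_nonneg (q - q')
            nlinarith
    rw [e1, abs_div, abs_of_pos (mul_pos hq0 hq'0)]
    rw [div_le_iff₀ (mul_pos hq0 hq'0)]
    have hfin : 2 / (δ * ε) * K * (q * q') = (2 * K) * q * (q' / (δ * ε)) := by
      field_simp
    rw [hfin]
    have h5 : (1:ℝ) ≤ q' / (δ * ε) := (one_le_div hδε).mpr hq'
    have h6 : |p' * q - p * q'| ≤ 2 * K * q := by nlinarith
    have h7 : 0 ≤ 2 * K * q := by positivity
    nlinarith
  · have hempty : xorSet μ f f' δ s = ∅ := by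
      ext t
      simp only [xorSet, Set.mem_setOf_eq, Set.mem_empty_iff_false, iff_false, not_and]
      intro _ h
      exact absurd h hd
    rw [hempty]
    simp only [measure_empty, ENNReal.toReal_zero]
    positivity

end AuxStability


/-- Stability of sequent barcodes: for `0 < ε ≤ 1`, `0 < δ ≤ 1` and finite variable sets
`V_A, V_S`, there is a constant `C > 0` (depending only on `card V_A`, `card V_S`, `ε`, `δ`)
such that for any probability space and any pair of `ε`-granular data maps `f, f'` having the
same set `𝒮_δ` of sequents satisfying the `δ`-condition, the barcode distance
`Σ_{s ∈ 𝒮_δ} λ(I_s(ℱ_δ(f)) Δ I_s(ℱ_δ(f')))` is at most `C · data-dist(f,f')`. -/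
theorem barcode_dist_le_const_mul_dataDist (A B : Type) [Fintype A] [Fintype B]
    (ε δ : ℝ) (hε0 : 0 < ε) (hε1 : ε ≤ 1) (hδ0 : 0 < δ) (hδ1 : δ ≤ 1) :
    ∃ C > (0:ℝ), ∀ (X : Type) [MeasurableSpace X] (μ : Measure X)
      [IsProbabilityMeasure μ] (f f' : A ⊕ B → Set X),
      (∀ v, MeasurableSet (f v)) → (∀ v, MeasurableSet (f' v)) →
      Granular μ f ε → Granular μ f' ε →
      {s : Finset A × Finset B | DeltaCond μ f δ s} =
        {s : Finset A × Finset B | DeltaCond μ f' δ s} →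
      ∑ s ∈ (Set.toFinite {s : Finset A × Finset B | DeltaCond μ f δ s}).toFinset,
          (volume (symmDiff (barDelta μ f δ s) (barDelta μ f' δ s))).toReal ≤
        C * dataDist μ f f' := by
  classical
  set N : ℕ := Fintype.card (Finset A × Finset B) with hN
  refine ⟨(N : ℝ) ^ 2 * (2 / (δ * ε)) + 1, by positivity, ?_⟩
  intro X _ μ _ f f' hmf hmf' hgf hgf' hset
  have hK0 : 0 ≤ dataDist μ f f' := Finset.sum_nonneg fun v _ => ENNReal.toReal_nonneg
  set K := dataDist μ f f' with hKdef
  have hiff : ∀ s, DeltaCond μ f δ s ↔ DeltaCond μ f' δ s := fun s => Set.ext_iff.mp hset s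
  have hδε : 0 < δ * ε := mul_pos hδ0 hε0
  -- each xorSet has finite volume
  have hxfin : ∀ s'' : Finset A × Finset B, volume (xorSet μ f f' δ s'') ≠ ⊤ := by
    intro s''
    refine ne_top_of_le_ne_top ?_ (measure_mono (fun t ht => ht.1))
    rw [Real.volume_Icc]
    exact ENNReal.ofReal_ne_top
  -- per-sequent bound
  have hper : ∀ s : Finset A × Finset B,
      (volume (symmDiff (barDelta μ f δ s) (barDelta μ f' δ s))).toReal ≤
        ∑ s'' : Finset A × Finset B, (volume (xorSet μ f f' δ s'')).toReal := by
    intro s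
    have hsub : symmDiff (barDelta μ f δ s) (barDelta μ f' δ s) ⊆
        ⋃ s'' : Finset A × Finset B, xorSet μ f f' δ s'' := by
      rw [Set.symmDiff_def]
      apply Set.union_subset
      · exact bar_sdiff_subset μ f f' δ hiff s
      · exact (bar_sdiff_subset μ f' f δ (fun s => (hiff s).symm) s).trans
          (Set.iUnion_mono fun s'' => xorSet_swap_subset μ f f' δ hiff s'')
    have h2 : volume (symmDiff (barDelta μ f δ s) (barDelta μ f' δ s)) ≤
        ∑ s'' : Finset A × Finset B, volume (xorSet μ f f' δ s'') :=
      (measure_mono hsub).trans (measure_iUnion_fintype_le _ _)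
    have h3 := ENNReal.toReal_mono
      (ENNReal.sum_lt_top.mpr fun s'' _ => lt_top_iff_ne_top.mpr (hxfin s'')).ne h2
    rwa [ENNReal.toReal_sum (fun s'' _ => hxfin s'')] at h3
  have hxle : ∀ s'' : Finset A × Finset B,
      (volume (xorSet μ f f' δ s'')).toReal ≤ 2 / (δ * ε) * K :=
    fun s'' => xor_vol_le μ f f' ε δ hε0 hε1 hδ0 hδ1 hgf hgf' hiff s''
  set T := (Set.toFinite {s : Finset A × Finset B | DeltaCond μ f δ s}).toFinset with hT
  have hcard : (T.card : ℝ) ≤ (N : ℝ) := by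
    exact_mod_cast Finset.card_le_univ T
  calc ∑ s ∈ T, (volume (symmDiff (barDelta μ f δ s) (barDelta μ f' δ s))).toReal
      ≤ ∑ _s ∈ T, ((N : ℝ) * (2 / (δ * ε) * K)) := by
        refine Finset.sum_le_sum fun s _ => (hper s).trans ?_
        calc ∑ s'' : Finset A × Finset B, (volume (xorSet μ f f' δ s'')).toReal
            ≤ ∑ _s'' : Finset A × Finset B, (2 / (δ * ε) * K) :=
              Finset.sum_le_sum fun s'' _ => hxle s''
          _ = (N : ℝ) * (2 / (δ * ε) * K) := by
              rw [Finset.sum_const, Finset.card_univ, nsmul_eq_mul, hN]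
    _ = (T.card : ℝ) * ((N : ℝ) * (2 / (δ * ε) * K)) := by
        rw [Finset.sum_const, nsmul_eq_mul]
    _ ≤ (N : ℝ) * ((N : ℝ) * (2 / (δ * ε) * K)) := by
        have hnn : 0 ≤ (N : ℝ) * (2 / (δ * ε) * K) := by positivity
        nlinarith [hcard, hnn, Nat.cast_nonneg (α := ℝ) T.card]
    _ ≤ ((N : ℝ) ^ 2 * (2 / (δ * ε)) + 1) * K := by nlinarith [hK0]
end
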